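/- Let θ ∈ ℤ be such that for every nonzero f : ZMod N → ℂ, ‖f‖₀ + ‖f̂‖₀ ≥ N − θ. Let k, k̂ ∈ ℕ and let g : ZMod N → ℂ be a generator such that for every p ∈ ZMod N, θ + 2k + 1 ≤ #{ℓ ∈ ZMod N : ⟨g, Π_{(p,ℓ)} g⟩ ≠ 0} ≤ k̂ (as integers). Let A, B be finite subsets of ZMod N with |A| ≥ θ + k̂ + 1 and |B| ≥ θ + (2k)² − 2k + 2 (as integers). Then the system {g_λ : λ ∈ A×B} allows k-sparse phase retrieval: for all x, y : ZMod N → ℂ with ‖x‖₀ ≤ k and ‖y‖₀ ≤ k, if |⟨x, g_λ⟩| = |⟨y, g_λ⟩| for every λ ∈ A×B, then there exists c ∈ ℂ with |c| = 1 and x = c • y. -/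

import Mathlib

open Complex Finset

/-- `gw N m = ω^m` where `ω = exp(2πi/N)` and `m : ZMod N`. -/
noncomputable def gw (N : ℕ) (m : ZMod N) : ℂ :=
  Complex.exp (2 * Real.pi * Complex.I * (m.val : ℂ) / (N : ℂ))

/-- Translation operator `(T_p x)(n) = x(n-p)`. -/
def Tr (N : ℕ) (p : ZMod N) (x : ZMod N → ℂ) : ZMod N → ℂ :=
  fun n => x (n - p)

/-- Modulation operator `(M_ℓ x)(n) = ω^{ℓ·n} x(n)`. -/
noncomputable def Md (N : ℕ) (l : ZMod N) (x : ZMod N → ℂ) : ZMod N → ℂ :=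
  fun n => gw N (l * n) * x n

/-- Time-frequency shift `Π_{(p,ℓ)} = M_ℓ ∘ T_p`. -/
noncomputable def Pig (N : ℕ) (p l : ZMod N) (x : ZMod N → ℂ) : ZMod N → ℂ :=
  Md N l (Tr N p x)

/-- Inner product, conjugate linear in the first argument. -/
noncomputable def inn (N : ℕ) [NeZero N] (x y : ZMod N → ℂ) : ℂ :=
  ∑ j : ZMod N, (starRingEnd ℂ) (x j) * y j

/-- The discrete Fourier transform `x̂(j) = ∑_n x(n) ω^{-nj}`. -/
noncomputable def dft (N : ℕ) [NeZero N] (x : ZMod N → ℂ) : ZMod N → ℂ :=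
  fun j => ∑ n : ZMod N, x n * gw N (-(n * j))

section basic
variable (N : ℕ) [NeZero N]

lemma gw_eq_pow (m : ZMod N) : gw N m = Complex.exp (2 * Real.pi * Complex.I / N) ^ m.val := by
  rw [← Complex.exp_nat_mul, gw]
  congr 1
  have hN : (N : ℂ) ≠ 0 := Nat.cast_ne_zero.mpr (NeZero.ne N)
  field_simp

lemma zeta_pow_N : Complex.exp (2 * Real.pi * Complex.I / N) ^ N = 1 :=
  (Complex.isPrimitiveRoot_exp N (NeZero.ne N)).pow_eq_one

lemma zeta_pow_mod (x : ℕ) : Complex.exp (2 * Real.pi * Complex.I / N) ^ (x % N) =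
    Complex.exp (2 * Real.pi * Complex.I / N) ^ x := by
  conv_rhs => rw [← Nat.mod_add_div x N]
  rw [pow_add, pow_mul, zeta_pow_N, one_pow, mul_one]

lemma gw_add (a b : ZMod N) : gw N (a + b) = gw N a * gw N b := by
  rw [gw_eq_pow, gw_eq_pow, gw_eq_pow, ZMod.val_add, zeta_pow_mod, pow_add]

omit [NeZero N] in
lemma gw_zero : gw N (0 : ZMod N) = 1 := by simp [gw]

omit [NeZero N] in
lemma gw_ne_zero (a : ZMod N) : gw N a ≠ 0 := Complex.exp_ne_zero _

omit [NeZero N] in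
lemma conj_gw' (a : ZMod N) : (starRingEnd ℂ) (gw N a) = (gw N a)⁻¹ := by
  rw [gw, ← Complex.exp_conj, ← Complex.exp_neg]
  congr 1
  simp [map_div₀, map_mul, Complex.conj_ofReal, Complex.conj_I, map_natCast, map_ofNat]
  ring

lemma conj_gw (a : ZMod N) : (starRingEnd ℂ) (gw N a) = gw N (-a) := by
  rw [conj_gw']
  have h2 : gw N (-a) * gw N a = 1 := by rw [← gw_add, neg_add_cancel, gw_zero]
  exact (eq_inv_of_mul_eq_one_left h2).symm

lemma sum_gw (d : ZMod N) : ∑ j : ZMod N, gw N (j * d) = if d = 0 then (N : ℂ) else 0 := by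
  set ζ := Complex.exp (2 * Real.pi * Complex.I / N) with hζ
  have key : ∀ j : ZMod N, gw N (j * d) = (ζ ^ d.val) ^ j.val := by
    intro j
    rw [gw_eq_pow, ZMod.val_mul, zeta_pow_mod, ← pow_mul, mul_comm j.val d.val, pow_mul]
  simp_rw [key]
  have hsum : ∑ j : ZMod N, (ζ ^ d.val) ^ (ZMod.val j) = ∑ i ∈ Finset.range N, (ζ ^ d.val) ^ i := by
    apply Finset.sum_nbij' (fun j => ZMod.val j) (fun i => (i : ZMod N)) <;>
      simp_all [ZMod.val_lt, ZMod.val_cast_of_lt, Finset.mem_range, Nat.mod_eq_of_lt]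
  rw [hsum]
  by_cases hd : d = 0
  · simp [hd]
  · rw [if_neg hd]
    have hdv : 0 < d.val := Nat.pos_of_ne_zero (fun h => hd (by rwa [ZMod.val_eq_zero] at h))
    have hne : ζ ^ d.val ≠ 1 :=
      (Complex.isPrimitiveRoot_exp N (NeZero.ne N)).pow_ne_one_of_pos_of_lt hdv.ne' (ZMod.val_lt d)
    rw [geom_sum_eq hne, ← pow_mul, mul_comm d.val N, pow_mul, zeta_pow_N, one_pow, sub_self,
      zero_div]
end basic

section comp
variable (N : ℕ) [NeZero N]

lemma dft_autocorr (c : ZMod N → ℂ) (m : ZMod N) :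
    dft N (fun j => (∑ n : ZMod N, c n * gw N (j * n)) *
      (starRingEnd ℂ) (∑ n : ZMod N, c n * gw N (j * n))) m
      = N * ∑ n : ZMod N, c (n + m) * (starRingEnd ℂ) (c n) := by
  have step1 : ∀ j : ZMod N,
      ((∑ n : ZMod N, c n * gw N (j * n)) *
        (starRingEnd ℂ) (∑ n : ZMod N, c n * gw N (j * n))) * gw N (-(j * m))
      = ∑ n : ZMod N, ∑ n' : ZMod N, c n * (starRingEnd ℂ) (c n') * gw N (j * (n - n' - m)) := by
    intro j
    rw [map_sum, Finset.sum_mul_sum, Finset.sum_mul]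
    refine Finset.sum_congr rfl fun n _ => ?_
    rw [Finset.sum_mul]
    refine Finset.sum_congr rfl fun n' _ => ?_
    rw [map_mul, conj_gw]
    have hg : gw N (j * n) * (gw N (-(j * n')) * gw N (-(j * m))) = gw N (j * (n - n' - m)) := by
      rw [← gw_add, ← gw_add]; congr 1; ring
    rw [← hg]; ring
  show ∑ j : ZMod N, _ * gw N (-(j * m)) = _
  calc ∑ j : ZMod N, ((∑ n : ZMod N, c n * gw N (j * n)) *
        (starRingEnd ℂ) (∑ n : ZMod N, c n * gw N (j * n))) * gw N (-(j * m))
      = ∑ j : ZMod N, ∑ n : ZMod N, ∑ n' : ZMod N,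
          c n * (starRingEnd ℂ) (c n') * gw N (j * (n - n' - m)) := by
        exact Finset.sum_congr rfl fun j _ => step1 j
    _ = ∑ n : ZMod N, ∑ n' : ZMod N, ∑ j : ZMod N,
          c n * (starRingEnd ℂ) (c n') * gw N (j * (n - n' - m)) := by
        rw [Finset.sum_comm]
        exact Finset.sum_congr rfl fun n _ => Finset.sum_comm
    _ = ∑ n : ZMod N, ∑ n' : ZMod N,
          c n * (starRingEnd ℂ) (c n') * (if n - n' - m = 0 then (N : ℂ) else 0) := by
        refine Finset.sum_congr rfl fun n _ => Finset.sum_congr rfl fun n' _ => ?_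
        rw [← Finset.mul_sum, sum_gw]
    _ = ∑ n' : ZMod N, ∑ n : ZMod N,
          (if n = n' + m then c n * (starRingEnd ℂ) (c n') * (N : ℂ) else 0) := by
        rw [Finset.sum_comm]
        refine Finset.sum_congr rfl fun n' _ => Finset.sum_congr rfl fun n _ => ?_
        rw [mul_ite, mul_zero]
        simp only [sub_sub, sub_eq_zero]
    _ = ∑ n' : ZMod N, c (n' + m) * (starRingEnd ℂ) (c n') * (N : ℂ) := by
        refine Finset.sum_congr rfl fun n' _ => ?_
        simp
    _ = N * ∑ n : ZMod N, c (n + m) * (starRingEnd ℂ) (c n) := by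
        rw [Finset.mul_sum]
        exact Finset.sum_congr rfl fun n _ => by ring

lemma dft_corr (w G : ZMod N → ℂ) (ξ : ZMod N) :
    dft N (fun q => ∑ n : ZMod N, w n * G (n - q)) ξ
      = (∑ n : ZMod N, w n * gw N (-(n * ξ))) * (∑ s : ZMod N, G s * gw N (s * ξ)) := by
  show ∑ q : ZMod N, (∑ n : ZMod N, w n * G (n - q)) * gw N (-(q * ξ)) = _
  calc ∑ q : ZMod N, (∑ n : ZMod N, w n * G (n - q)) * gw N (-(q * ξ))
      = ∑ q : ZMod N, ∑ n : ZMod N, w n * G (n - q) * gw N (-(q * ξ)) := by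
        exact Finset.sum_congr rfl fun q _ => Finset.sum_mul _ _ _
    _ = ∑ n : ZMod N, ∑ q : ZMod N, w n * G (n - q) * gw N (-(q * ξ)) := Finset.sum_comm
    _ = ∑ n : ZMod N, ∑ s : ZMod N, w n * G s * gw N (-((n - s) * ξ)) := by
        refine Finset.sum_congr rfl fun n _ => ?_
        rw [← Equiv.sum_comp (Equiv.subLeft n) (fun q => w n * G (n - q) * gw N (-(q * ξ)))]
        refine Finset.sum_congr rfl fun s _ => ?_
        simp [Equiv.subLeft]
    _ = ∑ n : ZMod N, ∑ s : ZMod N,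
          (w n * gw N (-(n * ξ))) * (G s * gw N (s * ξ)) := by
        refine Finset.sum_congr rfl fun n _ => Finset.sum_congr rfl fun s _ => ?_
        have hg : gw N (-((n - s) * ξ)) = gw N (-(n * ξ)) * gw N (s * ξ) := by
          rw [← gw_add]; congr 1; ring
        rw [hg]; ring
    _ = _ := by rw [← Finset.sum_mul_sum]

lemma Gm_sum (g : ZMod N → ℂ) (m ξ : ZMod N) :
    ∑ s : ZMod N, (g (s + m) * (starRingEnd ℂ) (g s)) * gw N (s * ξ)
      = (starRingEnd ℂ) (gw N (m * ξ) * inn N g (Pig N m (-ξ) g)) := by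
  have hinn : inn N g (Pig N m (-ξ) g)
      = ∑ t : ZMod N, (starRingEnd ℂ) (g t) * (gw N (-ξ * t) * g (t - m)) := rfl
  rw [map_mul, conj_gw, hinn, map_sum, Finset.mul_sum]
  rw [← Equiv.sum_comp (Equiv.addRight m) (fun t => gw N (-(m * ξ)) *
    (starRingEnd ℂ) ((starRingEnd ℂ) (g t) * (gw N (-ξ * t) * g (t - m))))]
  refine Finset.sum_congr rfl fun s _ => ?_
  simp only [Equiv.coe_addRight]
  rw [map_mul, map_mul, Complex.conj_conj, conj_gw, add_sub_cancel_right]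
  have hg : gw N (-(m * ξ)) * gw N (-(-ξ * (s + m))) = gw N (s * ξ) := by
    rw [← gw_add]; congr 1; ring
  rw [← hg]; ring

lemma ncard_compl_le {S P : Set (ZMod N)} (h : P ⊆ Sᶜ) :
    (P.ncard : ℤ) ≤ (N : ℤ) - S.ncard := by
  have h1 : P.ncard ≤ Sᶜ.ncard := Set.ncard_le_ncard h (Set.toFinite _)
  have h2 : S.ncard + Sᶜ.ncard = Nat.card (ZMod N) := Set.ncard_add_ncard_compl _
  rw [Nat.card_eq_fintype_card, ZMod.card] at h2
  omega

lemma ncard_vanish {f : ZMod N → ℂ} {C : Finset (ZMod N)} (h : ∀ j ∈ C, f j = 0) :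
    ({j | f j ≠ 0}.ncard : ℤ) ≤ (N : ℤ) - C.card := by
  have hsub : {j | f j ≠ 0} ⊆ (↑C : Set (ZMod N))ᶜ := fun j hj hjC => hj (h j hjC)
  have := ncard_compl_le N hsub
  rwa [Set.ncard_coe_finset] at this
end comp

/-- `k`-sparse phase retrieval from partial Gabor measurements: under the
uncertainty principle with constant `θ` and the condition
`θ + 2k + 1 ≤ ‖(⟨g, g_{p,·}⟩)‖₀ ≤ k̂` for every `p`, the measurements indexed
by `A × B` with `|A| ≥ θ + k̂ + 1` and `|B| ≥ θ + (2k)² - 2k + 2` allow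
`k`-sparse phase retrieval. -/
theorem Gabor_sparse_phase_retrieval (N : ℕ) [NeZero N] (θ : ℤ) (k khat : ℕ)
    (g : ZMod N → ℂ)
    (hUP : ∀ f : ZMod N → ℂ, f ≠ 0 →
      (N : ℤ) - θ ≤ (Set.ncard {n | f n ≠ 0} : ℤ) + (Set.ncard {j | dft N f j ≠ 0} : ℤ))
    (hg : ∀ p : ZMod N,
      θ + 2 * (k : ℤ) + 1 ≤ (Set.ncard {l | inn N g (Pig N p l g) ≠ 0} : ℤ) ∧
      (Set.ncard {l | inn N g (Pig N p l g) ≠ 0} : ℤ) ≤ (khat : ℤ))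
    (A B : Finset (ZMod N))
    (hA : θ + (khat : ℤ) + 1 ≤ (A.card : ℤ))
    (hB : θ + (2 * (k : ℤ)) ^ 2 - 2 * (k : ℤ) + 2 ≤ (B.card : ℤ)) :
    ∀ x y : ZMod N → ℂ,
      Set.ncard {n | x n ≠ 0} ≤ k → Set.ncard {n | y n ≠ 0} ≤ k →
      (∀ q ∈ A, ∀ j ∈ B,
        ‖inn N x (Pig N q j g)‖ = ‖inn N y (Pig N q j g)‖) →
      ∃ c : ℂ, ‖c‖ = 1 ∧ x = c • y := by
  intro x y hx hy hmeas
  classical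
  -- the combined support
  set T : Finset (ZMod N) := Finset.univ.filter (fun n => x n ≠ 0 ∨ y n ≠ 0) with hT
  have hTcard : T.card ≤ 2 * k := by
    have hcoe : (↑T : Set (ZMod N)) = {n | x n ≠ 0} ∪ {n | y n ≠ 0} := by
      ext n; simp [hT, Set.mem_union]
    have : T.card = ({n | x n ≠ 0} ∪ {n | y n ≠ 0} : Set (ZMod N)).ncard := by
      rw [← hcoe, Set.ncard_coe_finset]
    rw [this]
    calc ({n | x n ≠ 0} ∪ {n | y n ≠ 0} : Set (ZMod N)).ncard
        ≤ {n | x n ≠ 0}.ncard + {n | y n ≠ 0}.ncard := Set.ncard_union_le _ _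
      _ ≤ 2 * k := by omega
  set D : Finset (ZMod N) := insert 0 (T.offDiag.image (fun p => p.1 - p.2)) with hD
  have hDcard : (D.card : ℤ) ≤ (2 * (k : ℤ)) ^ 2 - 2 * k + 1 := by
    have h1 : D.card ≤ 1 + T.card * (T.card - 1) := by
      calc D.card ≤ (T.offDiag.image (fun p => p.1 - p.2)).card + 1 := Finset.card_insert_le _ _
        _ ≤ T.offDiag.card + 1 := by
            have := Finset.card_image_le (s := T.offDiag) (f := fun p : ZMod N × ZMod N => p.1 - p.2)
            omega
        _ = 1 + T.card * (T.card - 1) := by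
            rw [Finset.offDiag_card]
            have : T.card * T.card - T.card = T.card * (T.card - 1) := by
              cases T.card with
              | zero => simp
              | succ t => simp [Nat.succ_sub_one, Nat.mul_sub]; ring_nf; omega
            omega
    have h2 : T.card * (T.card - 1) + 2 * k ≤ 4 * k ^ 2 := by
      have h3 : T.card * (T.card - 1) ≤ 2 * k * (2 * k - 1) :=
        Nat.mul_le_mul hTcard (by omega)
      have h4 : 2 * k * (2 * k - 1) + 2 * k = 4 * k ^ 2 := by
        cases k with
        | zero => simp
        | succ t => ring_nf; rw [Nat.mul_sub]; ring_nf; omega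
      omega
    have h5 : (D.card : ℤ) + 2 * k ≤ 1 + 4 * (k : ℤ) ^ 2 := by
      have : D.card + 2 * k ≤ 1 + 4 * k ^ 2 := by omega
      exact_mod_cast this
    nlinarith
  -- measurement vectors
  have hux : ∀ (z : ZMod N → ℂ) (q j : ZMod N), inn N z (Pig N q j g)
      = ∑ n : ZMod N, ((starRingEnd ℂ) (z n) * g (n - q)) * gw N (j * n) := by
    intro z q j
    refine Finset.sum_congr rfl fun n _ => ?_
    show (starRingEnd ℂ) (z n) * (gw N (j * n) * g (n - q)) = _
    ring
  -- Step A : the local autocorrelations agree for q ∈ A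
  have stepA : ∀ q ∈ A, ∀ m : ZMod N,
      ∑ n : ZMod N, ((starRingEnd ℂ) (x (n + m)) * g (n + m - q)) *
        (starRingEnd ℂ) ((starRingEnd ℂ) (x n) * g (n - q))
      = ∑ n : ZMod N, ((starRingEnd ℂ) (y (n + m)) * g (n + m - q)) *
        (starRingEnd ℂ) ((starRingEnd ℂ) (y n) * g (n - q)) := by
    intro q hq
    set F : ZMod N → ℂ := fun j =>
      inn N x (Pig N q j g) * (starRingEnd ℂ) (inn N x (Pig N q j g))
      - inn N y (Pig N q j g) * (starRingEnd ℂ) (inn N y (Pig N q j g)) with hF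
    have hFB : ∀ j ∈ B, F j = 0 := by
      intro j hj
      have habs := hmeas q hq j hj
      simp only [hF]
      rw [Complex.mul_conj, Complex.mul_conj, Complex.normSq_eq_norm_sq, Complex.normSq_eq_norm_sq, habs,
        sub_self]
    have hdftF : ∀ m : ZMod N, dft N F m =
        N * (∑ n : ZMod N, ((starRingEnd ℂ) (x (n + m)) * g (n + m - q)) *
          (starRingEnd ℂ) ((starRingEnd ℂ) (x n) * g (n - q))
        - ∑ n : ZMod N, ((starRingEnd ℂ) (y (n + m)) * g (n + m - q)) *
          (starRingEnd ℂ) ((starRingEnd ℂ) (y n) * g (n - q))) := by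
      intro m
      have hsplit : dft N F m =
          dft N (fun j => inn N x (Pig N q j g) * (starRingEnd ℂ) (inn N x (Pig N q j g))) m
          - dft N (fun j => inn N y (Pig N q j g) * (starRingEnd ℂ) (inn N y (Pig N q j g))) m := by
        simp only [dft, hF, sub_mul, Finset.sum_sub_distrib]
      rw [hsplit]
      have hxa : dft N (fun j => inn N x (Pig N q j g) *
          (starRingEnd ℂ) (inn N x (Pig N q j g))) m
          = N * ∑ n : ZMod N, ((starRingEnd ℂ) (x (n + m)) * g (n + m - q)) *
            (starRingEnd ℂ) ((starRingEnd ℂ) (x n) * g (n - q)) := by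
        have := dft_autocorr N (fun n => (starRingEnd ℂ) (x n) * g (n - q)) m
        simp only [← hux] at this
        convert this using 3
      have hya : dft N (fun j => inn N y (Pig N q j g) *
          (starRingEnd ℂ) (inn N y (Pig N q j g))) m
          = N * ∑ n : ZMod N, ((starRingEnd ℂ) (y (n + m)) * g (n + m - q)) *
            (starRingEnd ℂ) ((starRingEnd ℂ) (y n) * g (n - q)) := by
        have := dft_autocorr N (fun n => (starRingEnd ℂ) (y n) * g (n - q)) m
        simp only [← hux] at this
        convert this using 3
      rw [hxa, hya, mul_sub]
    have hsupp : {m | dft N F m ≠ 0} ⊆ (↑D : Set (ZMod N)) := by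
      intro m hm
      by_contra hmD
      apply hm
      have hm0 : m ≠ 0 := by
        intro h; exact hmD (by rw [h]; exact Finset.mem_coe.mpr (Finset.mem_insert_self _ _))
      have hterm : ∀ z : ZMod N → ℂ, (∀ n, z n ≠ 0 → n ∈ T) →
          ∑ n : ZMod N, ((starRingEnd ℂ) (z (n + m)) * g (n + m - q)) *
            (starRingEnd ℂ) ((starRingEnd ℂ) (z n) * g (n - q)) = 0 := by
        intro z hz
        refine Finset.sum_eq_zero fun n _ => ?_
        by_contra hne
        have hz1 : z (n + m) ≠ 0 := fun h => hne (by simp [h])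
        have hz2 : z n ≠ 0 := fun h => hne (by simp [h])
        apply hmD
        refine Finset.mem_coe.mpr (Finset.mem_insert_of_mem ?_)
        refine Finset.mem_image.mpr ⟨(n + m, n), ?_, by ring⟩
        refine Finset.mem_offDiag.mpr ⟨hz (n + m) hz1, hz n hz2, ?_⟩
        intro h
        exact hm0 (by linear_combination h)
      rw [hdftF]
      rw [hterm x (fun n hn => Finset.mem_filter.mpr ⟨Finset.mem_univ _, Or.inl hn⟩),
        hterm y (fun n hn => Finset.mem_filter.mpr ⟨Finset.mem_univ _, Or.inr hn⟩), sub_self,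
        mul_zero]
    have hF0 : F = 0 := by
      by_contra hne
      have hup := hUP F hne
      have h1 : ({j | F j ≠ 0}.ncard : ℤ) ≤ (N : ℤ) - B.card := ncard_vanish N hFB
      have h2 : ({m | dft N F m ≠ 0}.ncard : ℤ) ≤ (D.card : ℤ) := by
        have := Set.ncard_le_ncard hsupp (Set.toFinite _)
        rw [Set.ncard_coe_finset] at this
        exact_mod_cast this
      linarith
    intro m
    have hz : dft N F m = 0 := by
      rw [hF0]; simp [dft]
    rw [hdftF] at hz
    have hN : (N : ℂ) ≠ 0 := Nat.cast_ne_zero.mpr (NeZero.ne N)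
    rcases mul_eq_zero.mp hz with h | h
    · exact absurd h hN
    · exact sub_eq_zero.mp h
  -- Step B : all local autocorrelations of x and y agree
  have stepB : ∀ m n : ZMod N,
      (starRingEnd ℂ) (x (n + m)) * x n = (starRingEnd ℂ) (y (n + m)) * y n := by
    intro m
    set w : ZMod N → ℂ := fun n =>
      (starRingEnd ℂ) (x (n + m)) * x n - (starRingEnd ℂ) (y (n + m)) * y n with hw
    set Gm : ZMod N → ℂ := fun s => g (s + m) * (starRingEnd ℂ) (g s) with hGm
    set h : ZMod N → ℂ := fun q => ∑ n : ZMod N, w n * Gm (n - q) with hh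
    -- h vanishes on A
    have hhA : ∀ q ∈ A, h q = 0 := by
      intro q hq
      have := stepA q hq m
      simp only [hh, hw, hGm]
      have hpt : ∀ n : ZMod N, w n * Gm (n - q)
          = ((starRingEnd ℂ) (x (n + m)) * g (n + m - q)) *
              (starRingEnd ℂ) ((starRingEnd ℂ) (x n) * g (n - q))
            - ((starRingEnd ℂ) (y (n + m)) * g (n + m - q)) *
              (starRingEnd ℂ) ((starRingEnd ℂ) (y n) * g (n - q)) := by
        intro n
        simp only [hw, hGm, map_mul, Complex.conj_conj]
        have harg : n - q + m = n + m - q := by ring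
        rw [harg]
        ring
      calc h q = ∑ n : ZMod N, (((starRingEnd ℂ) (x (n + m)) * g (n + m - q)) *
              (starRingEnd ℂ) ((starRingEnd ℂ) (x n) * g (n - q))
            - ((starRingEnd ℂ) (y (n + m)) * g (n + m - q)) *
              (starRingEnd ℂ) ((starRingEnd ℂ) (y n) * g (n - q))) :=
          Finset.sum_congr rfl fun n _ => hpt n
        _ = 0 := by rw [Finset.sum_sub_distrib, this, sub_self]
    -- dft of h factors
    have hdfth : ∀ ξ : ZMod N, dft N h ξ
        = dft N w ξ * (starRingEnd ℂ) (gw N (m * ξ) * inn N g (Pig N m (-ξ) g)) := by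
      intro ξ
      have h1 := dft_corr N w Gm ξ
      have h2 := Gm_sum N g m ξ
      simp only [hGm] at h1 h2 ⊢
      rw [hh]
      rw [h1, h2]
      rfl
    -- h is zero by the uncertainty principle
    have hS := hg m
    have hSneg : ({ξ | inn N g (Pig N m (-ξ) g) ≠ 0} : Set (ZMod N)).ncard
        = ({l | inn N g (Pig N m l g) ≠ 0} : Set (ZMod N)).ncard := by
      have himg : ({ξ | inn N g (Pig N m (-ξ) g) ≠ 0} : Set (ZMod N))
          = Neg.neg '' {l | inn N g (Pig N m l g) ≠ 0} := by
        ext ξ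
        constructor
        · intro hξ; exact ⟨-ξ, hξ, by simp⟩
        · rintro ⟨l, hl, rfl⟩; simpa using hl
      rw [himg, Set.ncard_image_of_injective _ neg_injective]
    have hh0 : h = 0 := by
      by_contra hne
      have hup := hUP h hne
      have h1 : ({q | h q ≠ 0}.ncard : ℤ) ≤ (N : ℤ) - A.card := ncard_vanish N hhA
      have h2 : ({ξ | dft N h ξ ≠ 0}.ncard : ℤ) ≤ (khat : ℤ) := by
        have hsub : {ξ | dft N h ξ ≠ 0} ⊆ {ξ | inn N g (Pig N m (-ξ) g) ≠ 0} := by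
          intro ξ hξ
          simp only [Set.mem_setOf_eq] at hξ ⊢
          intro hzero
          apply hξ
          rw [hdfth, hzero, mul_zero, map_zero, mul_zero]
        have := Set.ncard_le_ncard hsub (Set.toFinite _)
        rw [hSneg] at this
        calc ({ξ | dft N h ξ ≠ 0}.ncard : ℤ)
            ≤ (({l | inn N g (Pig N m l g) ≠ 0} : Set (ZMod N)).ncard : ℤ) := by exact_mod_cast this
          _ ≤ (khat : ℤ) := hS.2
      linarith
    -- dft of w vanishes where the window ambiguity is nonzero
    have hdftw : ∀ ξ : ZMod N, inn N g (Pig N m (-ξ) g) ≠ 0 → dft N w ξ = 0 := by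
      intro ξ hξ
      have hz : dft N h ξ = 0 := by rw [hh0]; simp [dft]
      rw [hdfth] at hz
      rcases mul_eq_zero.mp hz with h | h
      · exact h
      · exfalso
        rw [map_mul] at h
        rcases mul_eq_zero.mp h with h' | h'
        · exact gw_ne_zero N _ (by simpa using ((map_eq_zero (starRingEnd ℂ)).mp h'))
        · exact hξ (by simpa using ((map_eq_zero (starRingEnd ℂ)).mp h'))
    -- w is zero by the uncertainty principle
    have hw0 : w = 0 := by
      by_contra hne
      have hup := hUP w hne
      have h1 : ({n | w n ≠ 0}.ncard : ℤ) ≤ 2 * (k : ℤ) := by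
        have hsub : {n | w n ≠ 0} ⊆ {n | x n ≠ 0} ∪ {n | y n ≠ 0} := by
          intro n hn
          simp only [Set.mem_setOf_eq, Set.mem_union] at hn ⊢
          by_contra hc
          push_neg at hc
          apply hn
          simp [hw, hc.1, hc.2]
        have := le_trans (Set.ncard_le_ncard hsub (Set.toFinite _)) (Set.ncard_union_le _ _)
        have : {n | w n ≠ 0}.ncard ≤ 2 * k := by omega
        exact_mod_cast this
      have h2 : ({ξ | dft N w ξ ≠ 0}.ncard : ℤ)
          ≤ (N : ℤ) - (θ + 2 * (k : ℤ) + 1) := by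
        have hsub : {ξ | dft N w ξ ≠ 0} ⊆ ({ξ | inn N g (Pig N m (-ξ) g) ≠ 0} : Set (ZMod N))ᶜ := by
          intro ξ hξ
          simp only [Set.mem_compl_iff, Set.mem_setOf_eq, not_not]
          by_contra hc
          exact hξ (hdftw ξ hc)
        have := ncard_compl_le N hsub
        have hge : θ + 2 * (k : ℤ) + 1
            ≤ (({ξ | inn N g (Pig N m (-ξ) g) ≠ 0} : Set (ZMod N)).ncard : ℤ) := by
          rw [hSneg]; exact hS.1
        linarith
      linarith
    intro n
    have : w n = 0 := by rw [hw0]; rfl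
    simpa [hw, sub_eq_zero] using this
  -- Step C : conclude
  have hall : ∀ a b : ZMod N, (starRingEnd ℂ) (x a) * x b = (starRingEnd ℂ) (y a) * y b := by
    intro a b
    have := stepB (a - b) b
    rwa [add_sub_cancel] at this
  by_cases hx0 : x = 0
  · refine ⟨1, by simp, ?_⟩
    have hy0 : y = 0 := by
      funext b
      have := hall b b
      rw [hx0] at this
      simp only [Pi.zero_apply, map_zero, zero_mul] at this
      have habs : (Complex.normSq (y b) : ℂ) = 0 := by
        rw [Complex.normSq_eq_conj_mul_self]; exact this.symm
      exact Complex.normSq_eq_zero.mp (by exact_mod_cast habs)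
    rw [hx0, hy0]; simp
  · obtain ⟨a₀, ha₀⟩ : ∃ a₀, x a₀ ≠ 0 := by
      by_contra hc
      push_neg at hc
      exact hx0 (funext hc)
    have hxa : (starRingEnd ℂ) (x a₀) ≠ 0 := fun h => ha₀ ((map_eq_zero (starRingEnd ℂ)).mp h)
    have hya : y a₀ ≠ 0 := by
      intro h
      have := hall a₀ a₀
      rw [h] at this
      simp only [mul_zero] at this
      have h2 : ((Complex.normSq (x a₀)) : ℂ) = 0 := by
        rw [Complex.normSq_eq_conj_mul_self]; exact this
      exact ha₀ (Complex.normSq_eq_zero.mp (by exact_mod_cast h2))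
    refine ⟨(starRingEnd ℂ) (y a₀) / (starRingEnd ℂ) (x a₀), ?_, ?_⟩
    · rw [norm_div]
      simp only [Complex.norm_conj]
      have hnorm : ‖x a₀‖ = ‖y a₀‖ := by
        have := hall a₀ a₀
        have h1 : ((Complex.normSq (x a₀)) : ℂ) = ((Complex.normSq (y a₀)) : ℂ) := by
          rw [Complex.normSq_eq_conj_mul_self, Complex.normSq_eq_conj_mul_self, this]
        have h1' : Complex.normSq (x a₀) = Complex.normSq (y a₀) := by exact_mod_cast h1
        have := congrArg Real.sqrt h1'
        rwa [Complex.normSq_eq_norm_sq, Complex.normSq_eq_norm_sq, Real.sqrt_sq (norm_nonneg _),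
          Real.sqrt_sq (norm_nonneg _)] at this
      rw [hnorm, div_self (fun h => hya (norm_eq_zero.mp h))]
    · funext b
      have := hall a₀ b
      have hxb : x b = (starRingEnd ℂ) (y a₀) * y b / (starRingEnd ℂ) (x a₀) := by
        rw [eq_div_iff hxa]
        linear_combination this
      rw [hxb]
      simp only [Pi.smul_apply, smul_eq_mul]
      ring
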